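/- Let n ≥ 4, let G' ⊆ F₃(n) be an antichain with respect to ⪯, and let e' = (i,j) and f' = (k,ℓ) be elements of G' with gap(e') < gap(f') such that no element of G' has gap strictly between gap(e') and gap(f'). Then m' = (k+1, j+1) is an element of F₃(n) not belonging to ⟨G'⟩ := {x ∈ F₃(n) : x ⪯ g for some g ∈ G'}, m' is a ⪯-minimal element of F₃(n)∖⟨G'⟩, gap(e') < gap(m') < gap(f'), and m' is the unique ⪯-minimal element of F₃(n)∖⟨G'⟩ whose gap lies strictly between gap(e') and gap(f'). -/

import Mathlib

/-- The 4-element set `{i, i+1, j, j+1}`, denoted `(i,j)` in the paper. -/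
def pairSet (i j : ℕ) : Finset ℕ := {i, i + 1, j, j + 1}

/-- Membership in the collection `F₃(n)` of 4-element subsets of `{1,…,n}`
of the form `{i, i+1, j, j+1}` with `1 ≤ i`, `i+2 ≤ j`, `j+1 ≤ n`. -/
def memF3 (n : ℕ) (f : Finset ℕ) : Prop :=
  ∃ i j : ℕ, 1 ≤ i ∧ i + 2 ≤ j ∧ j + 1 ≤ n ∧ f = pairSet i j

/-- The partial order `⪯` on finite subsets of `ℕ` of equal cardinality:
componentwise comparison of the increasingly sorted lists of elements. -/
def squeezedLE (f g : Finset ℕ) : Prop :=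
  List.Forall₂ (· ≤ ·) (f.sort (· ≤ ·)) (g.sort (· ≤ ·))

/-- `I` is an order ideal of `F₃(n)` w.r.t. `⪯`. -/
def IsIdealF3 (n : ℕ) (I : Set (Finset ℕ)) : Prop :=
  (∀ f ∈ I, memF3 n f) ∧
  ∀ f g : Finset ℕ, memF3 n f → g ∈ I → squeezedLE f g → f ∈ I

/-- `max ⋃ I`, the largest vertex used by the collection `I`. -/
noncomputable def maxVertex (I : Set (Finset ℕ)) : ℕ :=
  sSup (⋃ f ∈ I, (f : Set ℕ))

/-- `0 * K = {{0} ∪ f : f ∈ K}`. -/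
def coneZero (K : Set (Finset ℕ)) : Set (Finset ℕ) := (insert 0) '' K

/-- A facet of the squeezed sphere `S(I)`: a 4-element set contained in
exactly one member of `I`. -/
def isFacetOfS (I : Set (Finset ℕ)) (F : Finset ℕ) : Prop :=
  F.card = 4 ∧ ∃! g, g ∈ I ∧ F ⊆ g

/-- The gap of `(i,j) = {i, i+1, j, j+1}`, i.e. `j - i - 2`. -/
def gapOf (f : Finset ℕ) : ℕ :=
  f.sup id - (f.sort (· ≤ ·)).headI - 3

/-- The order ideal `⟨G⟩ = {x ∈ F₃(n) : x ⪯ g for some g ∈ G}` generated by `G`. -/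
def genIdeal (n : ℕ) (G : Set (Finset ℕ)) : Set (Finset ℕ) :=
  {x | memF3 n x ∧ ∃ g ∈ G, squeezedLE x g}

/-- `m` is a `⪯`-minimal element of the set `S`. -/
def IsMinIn (S : Set (Finset ℕ)) (m : Finset ℕ) : Prop :=
  m ∈ S ∧ ∀ x ∈ S, squeezedLE x m → x = m


lemma pairSet_sort {i j : ℕ} (h : i + 2 ≤ j) :
    (pairSet i j).sort (· ≤ ·) = [i, i+1, j, j+1] := by
  have h1 : pairSet i j = [i, i+1, j, j+1].toFinset := by
    ext x; simp [pairSet]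
  have h2 : ([i, i+1, j, j+1] : List ℕ).Nodup := by simp; omega
  rw [h1, List.toFinset_sort _ h2]
  simp; omega

lemma squeezedLE_pair {a b c d : ℕ} (hab : a + 2 ≤ b) (hcd : c + 2 ≤ d) :
    squeezedLE (pairSet a b) (pairSet c d) ↔ a ≤ c ∧ b ≤ d := by
  rw [squeezedLE, pairSet_sort hab, pairSet_sort hcd]
  constructor
  · intro h
    rcases h with _ | ⟨h1, _ | ⟨h2, _ | ⟨h3, _⟩⟩⟩
    exact ⟨h1, h3⟩
  · rintro ⟨h1, h2⟩
    exact List.Forall₂.cons h1 (List.Forall₂.cons (by omega)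
      (List.Forall₂.cons h2 (List.Forall₂.cons (by omega) List.Forall₂.nil)))

lemma gapOf_pair {a b : ℕ} (hab : a + 2 ≤ b) : gapOf (pairSet a b) = b - a - 2 := by
  have hs : (pairSet a b).sup id = b + 1 := by
    simp [pairSet]; omega
  rw [gapOf, hs, pairSet_sort hab]
  simp; omega

lemma pairSet_inj {a b c d : ℕ} (hab : a + 2 ≤ b) (hcd : c + 2 ≤ d)
    (h : pairSet a b = pairSet c d) : a = c ∧ b = d := by
  have := congrArg (fun s : Finset ℕ => s.sort (· ≤ ·)) h
  simp only [pairSet_sort hab, pairSet_sort hcd] at this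
  injection this with h1 h2
  injection h2 with h3 h4
  injection h4 with h5 _
  exact ⟨h1, h5⟩

/-- **Observation 1.** Let `G ⊆ F₃(n)` be a `⪯`-antichain, and let
`e' = (i,j)` and `f' = (k,ℓ)` be elements of `G` with `gap e' < gap f'` and no
element of `G` having gap strictly in between. Then `m' = (k+1, j+1)` is the
unique `⪯`-minimal element of `F₃(n) ∖ ⟨G⟩` with `gap e' < gap m' < gap f'`. -/
theorem minimal_nonmember_between (n i j k l : ℕ) (hn : 4 ≤ n)
    (G : Set (Finset ℕ)) (hG : ∀ f ∈ G, memF3 n f)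
    (hanti : ∀ f ∈ G, ∀ g ∈ G, f ≠ g → ¬ squeezedLE f g)
    (hi : 1 ≤ i) (hij : i + 2 ≤ j) (hjn : j + 1 ≤ n) (he : pairSet i j ∈ G)
    (hk : 1 ≤ k) (hkl : k + 2 ≤ l) (hln : l + 1 ≤ n) (hf : pairSet k l ∈ G)
    (hgap : gapOf (pairSet i j) < gapOf (pairSet k l))
    (hbetw : ∀ x ∈ G, ¬ (gapOf (pairSet i j) < gapOf x ∧
      gapOf x < gapOf (pairSet k l))) :
    memF3 n (pairSet (k + 1) (j + 1)) ∧
    pairSet (k + 1) (j + 1) ∉ genIdeal n G ∧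
    IsMinIn {x | memF3 n x ∧ x ∉ genIdeal n G} (pairSet (k + 1) (j + 1)) ∧
    gapOf (pairSet i j) < gapOf (pairSet (k + 1) (j + 1)) ∧
    gapOf (pairSet (k + 1) (j + 1)) < gapOf (pairSet k l) ∧
    ∀ m : Finset ℕ, IsMinIn {x | memF3 n x ∧ x ∉ genIdeal n G} m →
      gapOf (pairSet i j) < gapOf m → gapOf m < gapOf (pairSet k l) →
      m = pairSet (k + 1) (j + 1) := by
  rw [gapOf_pair hij, gapOf_pair hkl] at hgap
  -- Step 0: k < i and j < l
  have hne : pairSet i j ≠ pairSet k l := by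
    intro h
    obtain ⟨h1, h2⟩ := pairSet_inj hij hkl h
    omega
  have h1 : ¬ (i ≤ k ∧ j ≤ l) := by
    intro h
    exact hanti _ he _ hf hne ((squeezedLE_pair hij hkl).2 h)
  have h2 : ¬ (k ≤ i ∧ l ≤ j) := by
    intro h
    exact hanti _ hf _ he hne.symm ((squeezedLE_pair hkl hij).2 h)
  have hki : k + 1 ≤ i := by omega
  have hjl : j + 1 ≤ l := by omega
  have hm : (k + 1) + 2 ≤ j + 1 := by omega
  -- membership in F₃
  have hmemF : memF3 n (pairSet (k + 1) (j + 1)) :=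
    ⟨k + 1, j + 1, by omega, hm, by omega, rfl⟩
  -- not in ideal
  have hnotmem : pairSet (k + 1) (j + 1) ∉ genIdeal n G := by
    rintro ⟨-, g, hgG, hle⟩
    obtain ⟨a, b, ha1, hab, hbn, rfl⟩ := hG g hgG
    rw [squeezedLE_pair hm hab] at hle
    have hcase : b - a ≤ j - i ∨ l - k ≤ b - a := by
      have := hbetw _ hgG
      rw [gapOf_pair hij, gapOf_pair hkl, gapOf_pair hab] at this
      omega
    rcases hcase with hc | hc
    · refine hanti _ he _ hgG ?_ ((squeezedLE_pair hij hab).2 ⟨by omega, by omega⟩)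
      intro h
      obtain ⟨-, h2⟩ := pairSet_inj hij hab h
      omega
    · refine hanti _ hf _ hgG ?_ ((squeezedLE_pair hkl hab).2 ⟨by omega, by omega⟩)
      intro h
      obtain ⟨h1, -⟩ := pairSet_inj hkl hab h
      omega
  -- minimality
  have hmin : IsMinIn {x | memF3 n x ∧ x ∉ genIdeal n G} (pairSet (k + 1) (j + 1)) := by
    refine ⟨⟨hmemF, hnotmem⟩, ?_⟩
    rintro x ⟨hxF, hxI⟩ hle
    obtain ⟨a, b, ha1, hab, hbn, rfl⟩ := hxF
    rw [squeezedLE_pair hab hm] at hle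
    by_cases hak : a ≤ k
    · exact absurd ⟨⟨a, b, ha1, hab, hbn, rfl⟩, pairSet k l, hf,
        (squeezedLE_pair hab hkl).2 ⟨by omega, by omega⟩⟩ hxI
    · by_cases hbj : b ≤ j
      · exact absurd ⟨⟨a, b, ha1, hab, hbn, rfl⟩, pairSet i j, he,
          (squeezedLE_pair hab hij).2 ⟨by omega, by omega⟩⟩ hxI
      · have h3 : a = k + 1 := by omega
        have h4 : b = j + 1 := by omega
        subst h3 h4
        rfl
  refine ⟨hmemF, hnotmem, hmin, ?_, ?_, ?_⟩
  · rw [gapOf_pair hij, gapOf_pair hm]; omega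
  · rw [gapOf_pair hm, gapOf_pair hkl]; omega
  · rintro m ⟨⟨hmF, hmI⟩, hminm⟩ hg1 hg2
    obtain ⟨a, b, ha1, hab, hbn, rfl⟩ := hmF
    rw [gapOf_pair hij, gapOf_pair hab] at hg1
    rw [gapOf_pair hab, gapOf_pair hkl] at hg2
    have hka : k + 1 ≤ a := by
      by_contra hc
      exact hmI ⟨⟨a, b, ha1, hab, hbn, rfl⟩, pairSet k l, hf,
        (squeezedLE_pair hab hkl).2 ⟨by omega, by omega⟩⟩
    have hjb : j + 1 ≤ b := by
      by_contra hc
      exact hmI ⟨⟨a, b, ha1, hab, hbn, rfl⟩, pairSet i j, he,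
        (squeezedLE_pair hab hij).2 ⟨by omega, by omega⟩⟩
    exact (hminm _ ⟨hmemF, hnotmem⟩ ((squeezedLE_pair hm hab).2 ⟨hka, hjb⟩)).symm
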